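/- Let N be a bounded normal operator in a Krein space and Q a bounded projection commuting with every operator that commutes with N. If the range of Q is uniformly positive (there is δ > 0 with [x,x] ≥ δ‖x‖² for all x ∈ ran Q), then Q is selfadjoint in the Krein space, i.e. Q⁺ = Q. -/

import Mathlib

open Filter Topology ContinuousLinearMap

noncomputable section

variable {H : Type*} [NormedAddCommGroup H] [InnerProductSpace ℂ H] [CompleteSpace H]

def kadj (J T : H →L[ℂ] H) : H →L[ℂ] H := J ∘L (ContinuousLinearMap.adjoint T) ∘L J

def ApproxEig (T : H →L[ℂ] H) (l : ℂ) (x : ℕ → H) : Prop :=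
  (∀ n, ‖x n‖ = 1) ∧ Tendsto (fun n => T (x n) - l • x n) atTop (nhds 0)

def approxSpec (T : H →L[ℂ] H) : Set ℂ := {l | ∃ x : ℕ → H, ApproxEig T l x}

def posType (J T : H →L[ℂ] H) : Set ℂ :=
  {l | l ∈ approxSpec T ∧ ∀ x : ℕ → H, ApproxEig T l x →
      0 < Filter.liminf (fun n => (inner ℂ (J (x n)) (x n) : ℂ).re) Filter.atTop}

lemma Jsq (J : H →L[ℂ] H) (hJ2 : J ∘L J = 1) (w : H) : J (J w) = w := by
  have := congrArg (fun S : H →L[ℂ] H => S w) hJ2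
  simpa using this

lemma kadj_comp (J A B : H →L[ℂ] H) (hJ2 : J ∘L J = 1) :
    kadj J (A ∘L B) = kadj J B ∘L kadj J A := by
  ext x
  simp only [kadj, ContinuousLinearMap.adjoint_comp, ContinuousLinearMap.comp_apply]
  rw [Jsq J hJ2]

lemma kadj_kadj (J T : H →L[ℂ] H) (hJ : ContinuousLinearMap.adjoint J = J)
    (hJ2 : J ∘L J = 1) : kadj J (kadj J T) = T := by
  ext x
  simp only [kadj, ContinuousLinearMap.adjoint_comp, ContinuousLinearMap.adjoint_adjoint,
    hJ, ContinuousLinearMap.comp_apply]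
  rw [Jsq J hJ2, Jsq J hJ2]

lemma kadj_inner (J T : H →L[ℂ] H) (hJ : ContinuousLinearMap.adjoint J = J)
    (hJ2 : J ∘L J = 1) (x z : H) :
    (inner ℂ (J (T x)) z : ℂ) = inner ℂ (J x) (kadj J T z) := by
  have hmove : ∀ a b : H, (inner ℂ (J a) b : ℂ) = inner ℂ a (J b) := by
    intro a b
    conv_lhs => rw [← hJ]
    exact ContinuousLinearMap.adjoint_inner_left J b a
  calc (inner ℂ (J (T x)) z : ℂ) = inner ℂ (T x) (J z) := hmove (T x) z
    _ = inner ℂ x (ContinuousLinearMap.adjoint T (J z)) :=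
        (ContinuousLinearMap.adjoint_inner_right T x (J z)).symm
    _ = inner ℂ x (J (J (ContinuousLinearMap.adjoint T (J z)))) := by rw [Jsq J hJ2]
    _ = inner ℂ (J x) (J (ContinuousLinearMap.adjoint T (J z))) :=
        (hmove x (J (ContinuousLinearMap.adjoint T (J z)))).symm
    _ = inner ℂ (J x) (kadj J T z) := by simp [kadj]

theorem proj_selfadjoint_of_uniformlyPositive (J N Q : H →L[ℂ] H)
    (hJ : ContinuousLinearMap.adjoint J = J) (hJ2 : J ∘L J = 1)
    (hN : N ∘L kadj J N = kadj J N ∘L N)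
    (hQ : Q ∘L Q = Q)
    (hcomm : ∀ B : H →L[ℂ] H, N ∘L B = B ∘L N → Q ∘L B = B ∘L Q)
    (δ : ℝ) (hδ : 0 < δ)
    (hpos : ∀ x ∈ Set.range Q, δ * ‖x‖ ^ 2 ≤ (inner ℂ (J x) x : ℂ).re) :
    kadj J Q = Q := by
  set P := kadj J Q with hP
  -- Q commutes with N⁺
  have h1 : Q ∘L kadj J N = kadj J N ∘L Q := hcomm (kadj J N) hN
  -- hence N commutes with Q⁺ = P
  have h2 : N ∘L P = P ∘L N := by
    have := congrArg (kadj J) h1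
    rwa [kadj_comp J Q (kadj J N) hJ2, kadj_comp J (kadj J N) Q hJ2,
      kadj_kadj J N hJ hJ2] at this
  -- hence Q commutes with P
  have h3 : Q ∘L P = P ∘L Q := hcomm P h2
  -- key claim : P ∘L Q = Q
  have claim : P ∘L Q = Q := by
    ext x
    set y := Q x - P (Q x) with hy
    have hQy : Q y = y := by
      have hx1 : Q (Q x) = Q x := by
        have := congrArg (fun S : H →L[ℂ] H => S x) hQ; simpa using this
      have hx2 : Q (P (Q x)) = P (Q x) := by
        have := congrArg (fun S : H →L[ℂ] H => S (Q x)) h3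
        simp only [ContinuousLinearMap.comp_apply] at this
        rw [this, hx1]
      simp [hy, map_sub, hx1, hx2]
    have hPy : P y = 0 := by
      have hPP : P ∘L P = P := by
        have := congrArg (kadj J) hQ
        rwa [kadj_comp J Q Q hJ2] at this
      have := congrArg (fun S : H →L[ℂ] H => S (Q x)) hPP
      simp only [ContinuousLinearMap.comp_apply] at this
      simp [hy, map_sub, this]
    have hzero : (inner ℂ (J y) y : ℂ) = 0 := by
      have := kadj_inner J Q hJ hJ2 y y
      rw [hQy, ← hP, hPy] at this
      simpa using this
    have hyr : y ∈ Set.range Q := ⟨y, hQy⟩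
    have hle := hpos y hyr
    rw [hzero] at hle
    simp only [Complex.zero_re] at hle
    have hn2 : ‖y‖ ^ 2 ≤ 0 := by nlinarith
    have hy0 : y = 0 := by
      have : ‖y‖ = 0 := by nlinarith [sq_nonneg ‖y‖, norm_nonneg y]
      exact norm_eq_zero.mp this
    have : P (Q x) = Q x := (sub_eq_zero.mp hy0).symm
    simpa using this
  -- apply kadj to the claim
  have claim2 : P ∘L Q = P := by
    have := congrArg (kadj J) claim
    rwa [kadj_comp J P Q hJ2, kadj_kadj J Q hJ hJ2, ← hP] at this
  rw [← claim, claim2]
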